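/- Let C be a category with a collection of morphisms S, and let X be an S-local object (for every s : Y → Z in S, precomposition by s gives a bijection C(Z,X) → C(Y,X)). Then for any object W, the localization functor induces a bijection C(W, X) → (S⁻¹C)(W, X). -/

import Mathlib

open CategoryTheory

/-- If `X` is an `S`-local object of a category `C`, then for every object `W'` the localization
functor induces a bijection `C(W', X) ≃ (S⁻¹C)(W', X)`. -/
theorem stmt_9 {C : Type} [Category C] (W : MorphismProperty C) (X : C)
    (hX : ∀ ⦃Y Z : C⦄ (s : Y ⟶ Z), W s → Function.Bijective (fun g : Z ⟶ X => s ≫ g)) :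
    ∀ W' : C, Function.Bijective (fun f : W' ⟶ X => W.Q.map f) := by
  intro W'
  constructor
  · -- injectivity, via lifting `yoneda.obj X` through the opposite localization
    have hF : W.op.IsInvertedBy (yoneda.obj X) := by
      intro Y Z s hs
      rw [CategoryTheory.isIso_iff_bijective]
      exact hX s.unop hs
    let G := Localization.lift (yoneda.obj X) hF W.Q.op
    let α : W.Q.op ⋙ G ≅ yoneda.obj X := Localization.fac (yoneda.obj X) hF W.Q.op
    intro f g hfg
    have key : ∀ (h : W' ⟶ X),
        α.hom.app (Opposite.op W') (G.map ((W.Q.map h).op)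
          (α.inv.app (Opposite.op X) (𝟙 X))) = h := by
      intro h
      have := types_congr_hom (α.hom.naturality h.op) (α.inv.app (Opposite.op X) (𝟙 X))
      simp only [types_comp_apply] at this
      have h2 := types_congr_hom (congr_app α.inv_hom_id (Opposite.op X)) (𝟙 X)
      simp only [NatTrans.comp_app, types_comp_apply, NatTrans.id_app, types_id_apply] at h2
      dsimp [Functor.comp_map] at this
      rw [this, h2]
      simp
    have hfg' : W.Q.map f = W.Q.map g := hfg
    have := key f
    rw [hfg', key g] at this
    exact this.symm
  · -- surjectivity, by induction on morphisms in the localized category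
    let P : MorphismProperty W.Localization := fun A B u =>
      ∀ (g : B.as.obj ⟶ X), ∃ f : A.as.obj ⟶ X, W.Q.map f = u ≫ W.Q.map g
    have : P.IsStableUnderComposition := by
      constructor
      intro A B C' u v hu hv g
      obtain ⟨f', hf'⟩ := hv g
      obtain ⟨f, hf⟩ := hu f'
      exact ⟨f, by rw [hf, hf']; exact (Category.assoc _ _ _).symm⟩
    have hP : P = ⊤ := by
      apply Localization.Construction.morphismProperty_eq_top P
      · intro Y Z h g
        exact ⟨h ≫ g, W.Q.map_comp h g⟩
      · intro Y Z w hw g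
        obtain ⟨f, hf⟩ := (hX w hw).2 g
        refine ⟨f, ?_⟩
        dsimp at hf
        rw [← hf]
        refine Eq.trans ?_ (congrArg (fun k => Localization.Construction.wInv w hw ≫ k) (W.Q.map_comp w f)).symm
        exact (Iso.inv_hom_id_assoc (Localization.Construction.wIso w hw) (W.Q.map f)).symm
    intro u
    have hu : P u := by rw [hP]; trivial
    obtain ⟨f, hf⟩ := hu (𝟙 X)
    refine ⟨f, ?_⟩
    have hid : W.Q.map (𝟙 X) = 𝟙 (W.Q.obj X) := W.Q.map_id X
    have hf := hf.trans ((congrArg (fun k => u ≫ k) hid).trans (Category.comp_id u))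
    exact hf
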